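/- Let v ∈ A₋* be a finite word over the alphabet {(−1:d) : d ≥ 2} with characteristic sequence a₁⋯a_{2ℓ+1}, and define v̂ as the word with 'transposed' characteristic sequence, i.e., v̂ = (−1:2+a₁)(−1:2)^{a₂−1}(−1:2+a₃)⋯(−1:2)^{a_{2ℓ}−1}(−1:2+a_{2ℓ+1}). Then the matrix identity M_{v̂} = E · W · M_v · E · W holds, where M_w denotes the reversed product M_{w_n}⋯M_{w_1} for w = w₁⋯w_n, M_{(−1:d)} = [[d,1],[−1,0]], E = [[1,−1],[0,1]], W = [[1,0],[−1,−1]]. -/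

import Mathlib

/-- M_{(−1:d)} = [[d,1],[−1,0]]. -/
def Mneg (d : ℤ) : Matrix (Fin 2) (Fin 2) ℤ := !![d, 1; -1, 0]

def Emat : Matrix (Fin 2) (Fin 2) ℤ := !![1, -1; 0, 1]

def Wmat : Matrix (Fin 2) (Fin 2) ℤ := !![1, 0; -1, -1]

/-- `prodRec f k = f (k−1) * ⋯ * f 1 * f 0`: the reversed product used for words,
since M_{uw} = M_w · M_u. -/
def prodRec (f : ℕ → Matrix (Fin 2) (Fin 2) ℤ) : ℕ → Matrix (Fin 2) (Fin 2) ℤ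
  | 0 => 1
  | k + 1 => f k * prodRec f k

/-- M_v for the word v = (−1:2)^{a₁−1}(−1:2+a₂)(−1:2)^{a₃−1}⋯(−1:2+a_{2ℓ})(−1:2)^{a_{2ℓ+1}−1}
with characteristic sequence a₁⋯a_{2ℓ+1} (here 0-indexed: a i = a_{i+1}),
as the reversed product M_{v_n}⋯M_{v_1}. -/
def Mword (a : ℕ → ℕ) (ℓ : ℕ) : Matrix (Fin 2) (Fin 2) ℤ :=
  Mneg 2 ^ (a (2 * ℓ) - 1) *
    prodRec (fun k => Mneg (2 + (a (2 * k + 1) : ℤ)) * Mneg 2 ^ (a (2 * k) - 1)) ℓ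

/-- M_{v̂} for the word v̂ = (−1:2+a₁)(−1:2)^{a₂−1}(−1:2+a₃)⋯(−1:2)^{a_{2ℓ}−1}(−1:2+a_{2ℓ+1}),
as the reversed product. -/
def Mhat (a : ℕ → ℕ) (ℓ : ℕ) : Matrix (Fin 2) (Fin 2) ℤ :=
  Mneg (2 + (a (2 * ℓ) : ℤ)) *
    prodRec (fun k => Mneg 2 ^ (a (2 * k + 1) - 1) * Mneg (2 + (a (2 * k) : ℤ))) ℓ

/-- For any word v over A₋ with characteristic sequence a₁⋯a_{2ℓ+1},
M_{v̂} = E · W · M_v · E · W. -/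
def Mpos (n : ℤ) : Matrix (Fin 2) (Fin 2) ℤ := !![n, -1; -1, 0]

def Fmat : Matrix (Fin 2) (Fin 2) ℤ := !![1, 1; 0, 1]

def Qmat (a : ℕ → ℕ) (m : ℕ) : Matrix (Fin 2) (Fin 2) ℤ :=
  prodRec (fun k => Mpos (a k)) m

lemma prodRec_succ (f : ℕ → Matrix (Fin 2) (Fin 2) ℤ) (k : ℕ) :
    prodRec f (k + 1) = f k * prodRec f k := rfl

lemma Qmat_succ (a : ℕ → ℕ) (m : ℕ) :
    Qmat a (m + 1) = Mpos (a m) * Qmat a m := rfl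

lemma EF : Emat * Fmat = 1 := by
  simp [Emat, Fmat, Matrix.mul_fin_two, Matrix.one_fin_two]

lemma FE : Fmat * Emat = 1 := by
  simp [Emat, Fmat, Matrix.mul_fin_two, Matrix.one_fin_two]

lemma WW : Wmat * Wmat = 1 := by
  simp [Wmat, Matrix.mul_fin_two, Matrix.one_fin_two]

lemma lemA (n : ℕ) : Mneg 2 ^ n = Wmat * Mpos ((n : ℤ) + 1) * Fmat := by
  induction n with
  | zero =>
    simp [Mneg, Mpos, Wmat, Fmat, Matrix.mul_fin_two, Matrix.one_fin_two]
  | succ m ih =>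
    rw [pow_succ', ih, Mneg, Mpos, Mpos, Wmat, Fmat]
    push_cast
    simp [Matrix.mul_fin_two]
    ring_nf
    all_goals trivial

lemma lemA' (n : ℕ) (hn : 1 ≤ n) :
    Mneg 2 ^ (n - 1) = Wmat * Mpos (n : ℤ) * Fmat := by
  obtain ⟨m, rfl⟩ := Nat.exists_eq_add_of_le hn
  have : 1 + m - 1 = m := by omega
  rw [this, lemA]
  push_cast
  ring_nf

lemma lemB (n : ℕ) : Mneg (2 + (n : ℤ)) = Emat * Mpos (n : ℤ) * Wmat := by
  rw [Mneg, Mpos, Emat, Wmat]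
  simp [Matrix.mul_fin_two]
  ring_nf

lemma Mword_eq (a : ℕ → ℕ) (ℓ : ℕ) (ha : ∀ i ≤ 2 * ℓ, 1 ≤ a i) :
    Mword a ℓ = Wmat * Qmat a (2 * ℓ + 1) * Fmat := by
  induction ℓ with
  | zero =>
    simp only [Mword, prodRec, Qmat, mul_one]
    rw [lemA' _ (ha 0 (by omega))]
  | succ m ih =>
    have h1 : Mword a (m + 1)
        = Mneg 2 ^ (a (2 * (m + 1)) - 1) * Mneg (2 + (a (2 * m + 1) : ℤ))
          * Mword a m := by
      simp only [Mword, prodRec_succ]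
      noncomm_ring
    rw [h1, ih (fun i hi => ha i (by omega)), lemA' _ (ha (2 * (m + 1)) (by omega)),
      lemB]
    have h2 : Qmat a (2 * (m + 1) + 1)
        = Mpos (a (2 * (m + 1))) * (Mpos (a (2 * m + 1)) * Qmat a (2 * m + 1)) := by
      rw [show 2 * (m + 1) + 1 = (2 * m + 1) + 1 + 1 by ring, Qmat_succ, Qmat_succ,
        show 2 * m + 1 + 1 = 2 * (m + 1) by ring]
    rw [h2]
    calc Wmat * Mpos (a (2 * (m + 1))) * Fmat * (Emat * Mpos (a (2 * m + 1)) * Wmat) *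
          (Wmat * Qmat a (2 * m + 1) * Fmat)
        = Wmat * Mpos (a (2 * (m + 1))) * (Fmat * Emat) * Mpos (a (2 * m + 1)) *
            (Wmat * Wmat) * Qmat a (2 * m + 1) * Fmat := by noncomm_ring
      _ = Wmat * (Mpos (a (2 * (m + 1))) * (Mpos (a (2 * m + 1)) *
            Qmat a (2 * m + 1))) * Fmat := by rw [FE, WW]; noncomm_ring

lemma Mhat_eq' (a : ℕ → ℕ) (ℓ : ℕ) (ha : ∀ i ≤ 2 * ℓ, 1 ≤ a i) :
    Mhat a ℓ = Emat * Qmat a (2 * ℓ + 1) * Wmat := by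
  induction ℓ with
  | zero =>
    simp only [Mhat, prodRec, Qmat, mul_one]
    rw [lemB]
  | succ m ih =>
    have h1 : Mhat a (m + 1)
        = Mneg (2 + (a (2 * (m + 1)) : ℤ)) * Mneg 2 ^ (a (2 * m + 1) - 1)
          * Mhat a m := by
      simp only [Mhat, prodRec_succ]
      noncomm_ring
    rw [h1, ih (fun i hi => ha i (by omega)), lemA' _ (ha (2 * m + 1) (by omega)),
      lemB]
    have h2 : Qmat a (2 * (m + 1) + 1)
        = Mpos (a (2 * (m + 1))) * (Mpos (a (2 * m + 1)) * Qmat a (2 * m + 1)) := by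
      rw [show 2 * (m + 1) + 1 = (2 * m + 1) + 1 + 1 by ring, Qmat_succ, Qmat_succ,
        show 2 * m + 1 + 1 = 2 * (m + 1) by ring]
    rw [h2]
    calc Emat * Mpos (a (2 * (m + 1))) * Wmat * (Wmat * Mpos (a (2 * m + 1)) * Fmat) *
          (Emat * Qmat a (2 * m + 1) * Wmat)
        = Emat * Mpos (a (2 * (m + 1))) * (Wmat * Wmat) * Mpos (a (2 * m + 1)) *
            (Fmat * Emat) * Qmat a (2 * m + 1) * Wmat := by noncomm_ring
      _ = Emat * (Mpos (a (2 * (m + 1))) * (Mpos (a (2 * m + 1)) *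
            Qmat a (2 * m + 1))) * Wmat := by rw [FE, WW]; noncomm_ring

/-- For any word v over A₋ with characteristic sequence a₁⋯a_{2ℓ+1},
M_{v̂} = E · W · M_v · E · W. -/
theorem Mhat_eq (a : ℕ → ℕ) (ℓ : ℕ) (ha : ∀ i ≤ 2 * ℓ, 1 ≤ a i) :
    Mhat a ℓ = Emat * Wmat * Mword a ℓ * Emat * Wmat := by
  rw [Mhat_eq' a ℓ ha, Mword_eq a ℓ ha]
  symm
  calc Emat * Wmat * (Wmat * Qmat a (2 * ℓ + 1) * Fmat) * Emat * Wmat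
      = Emat * (Wmat * Wmat) * Qmat a (2 * ℓ + 1) * (Fmat * Emat) * Wmat := by
        noncomm_ring
    _ = Emat * Qmat a (2 * ℓ + 1) * Wmat := by rw [FE, WW]; noncomm_ring
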